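/- For every even positive integer n, there exists an invertible n×n matrix over GF(2) such that every 2×2 block in its uniform partition into 2×2 blocks is invertible. -/

import Mathlib

open Matrix Kronecker

namespace BlockGF2

abbrev A : Matrix (Fin 2) (Fin 2) (ZMod 2) := !![0,1;1,1]
abbrev B : Matrix (Fin 2) (Fin 2) (ZMod 2) := A * A

lemma hBA : B * A = 1 := by decide
lemma hBB : B * B = A := by decide
lemma hsum : (1 : Matrix (Fin 2) (Fin 2) (ZMod 2)) + A + B = 0 := by decide
lemma hAunit : IsUnit A := by
  rw [Matrix.isUnit_iff_isUnit_det]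
  decide
lemma honeA : (1 : Matrix (Fin 2) (Fin 2) (ZMod 2)) + B = A := by decide

def Jall (m : ℕ) : Matrix (Fin m) (Fin m) (ZMod 2) := Matrix.of fun _ _ => 1

lemma JallJall (m : ℕ) : Jall m * Jall m = (m : ZMod 2) • Jall m := by
  ext i j
  simp [Jall, Matrix.mul_apply, Finset.sum_const]

lemma addSelf {n : Type*} [Fintype n] (X : Matrix n n (ZMod 2)) : X + X = 0 := by
  ext i j
  exact CharTwo.add_self_eq_zero _

end BlockGF2

open BlockGF2 in
/-- For every even positive integer `n = 2 * m`, there is an invertible `n × n` matrix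
over `GF(2)` (indexed by `Fin m × Fin 2`) all of whose `2 × 2` blocks are invertible. -/
theorem exists_block_invertible_gf2 (m : ℕ) (hm : 0 < m) :
    ∃ M : Matrix (Fin m × Fin 2) (Fin m × Fin 2) (ZMod 2), IsUnit M ∧
      ∀ i j : Fin m,
        IsUnit (Matrix.of fun a b : Fin 2 => M (i, a) (j, b)) := by
  refine ⟨Jall m ⊗ₖ 1 + 1 ⊗ₖ B, ?_, ?_⟩
  · -- invertibility: exhibit an explicit right inverse
    have key : ∃ N, (Jall m ⊗ₖ 1 + 1 ⊗ₖ B) * N = 1 := by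
      rcases Nat.even_or_odd m with he | ho
      · refine ⟨Jall m ⊗ₖ B + 1 ⊗ₖ A, ?_⟩
        have h0 : (m : ZMod 2) = 0 := by
          rw [← ZMod.natCast_mod, Nat.even_iff.mp he, Nat.cast_zero]
        have hJ : Jall m * Jall m = 0 := by rw [JallJall, h0, zero_smul]
        rw [add_mul, mul_add, mul_add, ← Matrix.mul_kronecker_mul, ← Matrix.mul_kronecker_mul,
          ← Matrix.mul_kronecker_mul, ← Matrix.mul_kronecker_mul, hJ, hBB, hBA,
          Matrix.zero_kronecker, one_mul, mul_one, one_mul, mul_one,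
          Matrix.one_kronecker_one, zero_add, ← add_assoc, addSelf, zero_add]
      · refine ⟨Jall m ⊗ₖ 1 + 1 ⊗ₖ A, ?_⟩
        have h1 : (m : ZMod 2) = 1 := by
          rw [← ZMod.natCast_mod, Nat.odd_iff.mp ho, Nat.cast_one]
        have hJ : Jall m * Jall m = Jall m := by rw [JallJall, h1, one_smul]
        rw [add_mul, mul_add, mul_add, ← Matrix.mul_kronecker_mul, ← Matrix.mul_kronecker_mul,
          ← Matrix.mul_kronecker_mul, ← Matrix.mul_kronecker_mul, hJ, hBA]
        simp only [one_mul, mul_one]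
        rw [Matrix.one_kronecker_one,
          ← add_assoc, ← Matrix.kronecker_add, ← Matrix.kronecker_add,
          hsum, Matrix.kronecker_zero, zero_add]
    obtain ⟨N, hN⟩ := key
    rw [Matrix.isUnit_iff_isUnit_det]
    have := congrArg Matrix.det hN
    rw [Matrix.det_mul, Matrix.det_one] at this
    exact IsUnit.of_mul_eq_one _ this
  · intro i j
    have hblock : (Matrix.of
        fun a b : Fin 2 => (Jall m ⊗ₖ (1 : Matrix (Fin 2) (Fin 2) (ZMod 2)) +
          (1 : Matrix (Fin m) (Fin m) (ZMod 2)) ⊗ₖ B) (i, a) (j, b))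
        = if i = j then A else 1 := by
      ext a b
      simp only [Matrix.of_apply, Matrix.add_apply, Matrix.kroneckerMap_apply, Jall,
        Matrix.one_apply]
      by_cases h : i = j
      · simp only [if_pos h, one_mul]
        have := congrFun (congrFun honeA a) b
        simpa only [Matrix.add_apply, Matrix.one_apply] using this
      · simp only [if_neg h, zero_mul, mul_zero, add_zero, one_mul]
        exact (Matrix.one_apply).symm
    rw [hblock]
    split
    · exact hAunit
    · exact isUnit_one
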